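/- For every n ≥ 1, the following identity of formal power series in one variable x over ℚ holds: ((e^x − 1)^{n−1}/(n−1)!) · e^x · e^{−(e^x − 1)} = Σ_{m≥0} a_{m,n} x^m/m!, where a_{m,n} = Σ_{k=1}^{m+1} (−1)^{k−n} · C(k−1, n−1) · S(m+1, k) for n ≤ m+1 and a_{m,n} = 0 for n > m+1. In particular, the coefficient of x^m/m! vanishes whenever n > m + 1. -/

import Mathlib

/-- `stirling n k` is the Stirling number of the second kind `S(n,k)`: the number of
partitions of an `n`-element set into exactly `k` nonempty blocks. -/
noncomputable def stirling (n k : ℕ) : ℕ :=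
  Nat.card {P : Finpartition (Finset.univ : Finset (Fin n)) // P.parts.card = k}


open Finset Function

variable {m k : ℕ}

def fiber (f : Fin m → Fin k) (i : Fin k) : Finset (Fin m) := univ.filter fun x => f x = i

instance kerDec (f : Fin m → Fin k) : DecidableRel (Setoid.ker f).r :=
  fun a b => decidable_of_iff (f a = f b) Iff.rfl

noncomputable def fiberPart (f : Fin m → Fin k) : Finpartition (univ : Finset (Fin m)) :=
  Finpartition.ofSetoid (Setoid.ker f)

lemma mem_fiber {f : Fin m → Fin k} {x : Fin m} {i : Fin k} : x ∈ fiber f i ↔ f x = i := by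
  simp [fiber]

lemma fiber_nonempty {f : Fin m → Fin k} (hf : Surjective f) (i : Fin k) :
    (fiber f i).Nonempty := by
  obtain ⟨x, hx⟩ := hf i
  exact ⟨x, mem_fiber.2 hx⟩

lemma fiber_injective {f : Fin m → Fin k} (hf : Surjective f) : Injective (fiber f) := by
  intro i j h
  obtain ⟨x, hx⟩ := fiber_nonempty hf i
  have hx' : x ∈ fiber f j := h ▸ hx
  rw [mem_fiber] at hx hx'
  rw [← hx, hx']

lemma parts_fiberPart {f : Fin m → Fin k} (hf : Surjective f) :
    (fiberPart f).parts = univ.image (fiber f) := by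
  have hclass : ∀ a : Fin m,
      ({b | (Setoid.ker f).r a b} : Finset (Fin m)) = fiber f (f a) := by
    intro a
    ext b
    simp only [Finset.mem_filter, mem_univ, true_and, mem_fiber]
    exact ⟨fun h => h.symm, fun h => h.symm⟩
  ext B
  constructor
  · rintro hB
    rw [fiberPart, Finpartition.ofSetoid, Finpartition.ofSetSetoid, mem_image] at hB
    obtain ⟨a, _, rfl⟩ := hB
    exact mem_image.2 ⟨f a, mem_univ _, (hclass a).symm ▸ rfl⟩
  · rintro hB
    rw [mem_image] at hB
    obtain ⟨i, _, rfl⟩ := hB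
    obtain ⟨a, ha⟩ := hf i
    rw [fiberPart, Finpartition.ofSetoid, Finpartition.ofSetSetoid]
    exact mem_image.2 ⟨a, mem_univ _, by rw [hclass a, ha]⟩

lemma card_parts_fiberPart {f : Fin m → Fin k} (hf : Surjective f) :
    (fiberPart f).parts.card = k := by
  rw [parts_fiberPart hf, Finset.card_image_of_injective _ (fiber_injective hf), card_univ,
    Fintype.card_fin]

variable {m k : ℕ}

noncomputable def fromEquiv (P : Finpartition (univ : Finset (Fin m)))
    (e : {B // B ∈ P.parts} ≃ Fin k) : Fin m → Fin k :=
  fun x => e ⟨P.part x, P.part_mem.2 (mem_univ x)⟩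

lemma fiber_fromEquiv (P : Finpartition (univ : Finset (Fin m)))
    (e : {B // B ∈ P.parts} ≃ Fin k) (i : Fin k) :
    fiber (fromEquiv P e) i = (e.symm i : { B // B ∈ P.parts}).1 := by
  ext x
  rw [mem_fiber, fromEquiv]
  rw [Equiv.apply_eq_iff_eq_symm_apply]
  constructor
  · rintro h
    have : P.part x = (e.symm i).1 := by rw [← h]
    exact this ▸ P.mem_part (mem_univ x)
  · intro hx
    have : P.part x = (e.symm i).1 := P.part_eq_of_mem (e.symm i).2 hx
    exact Subtype.ext this

lemma fromEquiv_surjective (P : Finpartition (univ : Finset (Fin m)))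
    (e : {B // B ∈ P.parts} ≃ Fin k) : Surjective (fromEquiv P e) := by
  intro i
  obtain ⟨x, hx⟩ := P.nonempty_of_mem_parts (e.symm i).2
  refine ⟨x, ?_⟩
  have : x ∈ fiber (fromEquiv P e) i := by rw [fiber_fromEquiv]; exact hx
  exact mem_fiber.1 this

lemma fiberPart_fromEquiv (P : Finpartition (univ : Finset (Fin m)))
    (e : {B // B ∈ P.parts} ≃ Fin k) : fiberPart (fromEquiv P e) = P := by
  ext B
  rw [parts_fiberPart (fromEquiv_surjective P e)]
  simp only [mem_image, mem_univ, true_and]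
  constructor
  · rintro ⟨i, rfl⟩
    rw [fiber_fromEquiv]
    exact (e.symm i).2
  · intro hB
    exact ⟨e ⟨B, hB⟩, by rw [fiber_fromEquiv, Equiv.symm_apply_apply]⟩

noncomputable def toEquivAux {f : Fin m → Fin k} (hf : Surjective f)
    (P : Finpartition (univ : Finset (Fin m))) (hfP : fiberPart f = P) :
    Fin k → {B // B ∈ P.parts} :=
  fun i => ⟨fiber f i, by
    rw [← hfP, parts_fiberPart hf]; exact mem_image.2 ⟨i, mem_univ _, rfl⟩⟩

lemma toEquivAux_bijective {f : Fin m → Fin k} (hf : Surjective f)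
    (P : Finpartition (univ : Finset (Fin m))) (hfP : fiberPart f = P) :
    Bijective (toEquivAux hf P hfP) := by
  constructor
  · intro i j h
    exact fiber_injective hf (congrArg Subtype.val h)
  · rintro ⟨B, hB⟩
    rw [← hfP, parts_fiberPart hf, mem_image] at hB
    obtain ⟨i, _, rfl⟩ := hB
    exact ⟨i, rfl⟩

noncomputable def toEquiv {f : Fin m → Fin k} (hf : Surjective f)
    (P : Finpartition (univ : Finset (Fin m))) (hfP : fiberPart f = P) :
    {B // B ∈ P.parts} ≃ Fin k :=
  (Equiv.ofBijective _ (toEquivAux_bijective hf P hfP)).symm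

/-- The key equivalence, for a fixed partition `P`. -/
noncomputable def fiberEquiv (P : Finpartition (univ : Finset (Fin m)))
    (hP : P.parts.card = k) :
    {q : {f : Fin m → Fin k // Surjective f} // fiberPart q.1 = P} ≃
      ({B // B ∈ P.parts} ≃ Fin k) where
  toFun q := toEquiv q.1.2 P q.2
  invFun e := ⟨⟨fromEquiv P e, fromEquiv_surjective P e⟩, fiberPart_fromEquiv P e⟩
  left_inv := by
    rintro ⟨⟨f, hf⟩, hfP⟩
    refine Subtype.ext (Subtype.ext (funext fun x => ?_))
    show fromEquiv P (toEquiv hf P hfP) x = f x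
    rw [fromEquiv, toEquiv, Equiv.symm_apply_eq, Equiv.ofBijective_apply]
    refine Subtype.ext ?_
    show P.part x = fiber f (f x)
    have hmem : fiber f (f x) ∈ P.parts := by
      rw [← hfP, parts_fiberPart hf]; exact mem_image.2 ⟨f x, mem_univ _, rfl⟩
    exact P.part_eq_of_mem hmem (mem_fiber.2 rfl)
  right_inv := by
    intro e
    refine Equiv.ext fun B => ?_
    show toEquiv (fromEquiv_surjective P e) P (fiberPart_fromEquiv P e) B = e B
    rw [toEquiv, Equiv.symm_apply_eq, Equiv.ofBijective_apply]
    refine Subtype.ext ?_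
    show B.1 = fiber (fromEquiv P e) (e B)
    rw [fiber_fromEquiv, Equiv.symm_apply_apply]

instance : Finite (Finpartition (univ : Finset (Fin m))) :=
  Finite.of_injective Finpartition.parts fun P Q h => Finpartition.ext (by rw [h])

lemma card_surj_eq (m k : ℕ) :
    Nat.card {f : Fin m → Fin k // Surjective f} = k.factorial * stirling m k := by
  classical
  let Φ : {f : Fin m → Fin k // Surjective f} →
      {P : Finpartition (univ : Finset (Fin m)) // P.parts.card = k} :=
    fun q => ⟨fiberPart q.1, card_parts_fiberPart q.2⟩
  have h1 : Nat.card {f : Fin m → Fin k // Surjective f} =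
      Nat.card (Σ P : {P : Finpartition (univ : Finset (Fin m)) // P.parts.card = k},
        {q : {f : Fin m → Fin k // Surjective f} // Φ q = P}) :=
    Nat.card_congr (Equiv.sigmaFiberEquiv Φ).symm
  rw [h1]
  haveI : Fintype {P : Finpartition (univ : Finset (Fin m)) // P.parts.card = k} :=
    Fintype.ofFinite _
  haveI : ∀ P : {P : Finpartition (univ : Finset (Fin m)) // P.parts.card = k},
      Fintype {q : {f : Fin m → Fin k // Surjective f} // Φ q = P} :=
    fun P => Fintype.ofFinite _
  rw [Nat.card_eq_fintype_card, Fintype.card_sigma]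
  have h2 : ∀ P : {P : Finpartition (univ : Finset (Fin m)) // P.parts.card = k},
      Fintype.card {q : {f : Fin m → Fin k // Surjective f} // Φ q = P} = k.factorial := by
    intro P
    have e1 : {q : {f : Fin m → Fin k // Surjective f} // Φ q = P} ≃
        ({B // B ∈ P.1.parts} ≃ Fin k) := by
      refine (Equiv.subtypeEquivRight fun q => ?_).trans (fiberEquiv P.1 P.2)
      exact ⟨fun h => congrArg Subtype.val h, fun h => Subtype.ext h⟩
    rw [Fintype.card_congr e1]
    have hcard : Fintype.card {B // B ∈ P.1.parts} = Fintype.card (Fin k) := by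
      rw [Fintype.card_coe, P.2, Fintype.card_fin]
    rw [Fintype.card_equiv (Fintype.equivOfCardEq hcard), Fintype.card_coe, P.2]
  rw [Finset.sum_congr rfl fun P _ => h2 P, Finset.sum_const, smul_eq_mul, mul_comm]
  congr 1
  rw [stirling, Nat.card_eq_fintype_card, Finset.card_univ]

lemma negpow_congr {R : Type*} [Monoid R] [HasDistribNeg R] {a b : ℕ} (h : a % 2 = b % 2) :
    (-1 : R) ^ a = (-1 : R) ^ b := by
  conv_lhs => rw [← Nat.div_add_mod a 2]
  conv_rhs => rw [← Nat.div_add_mod b 2]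
  rw [pow_add, pow_add, pow_mul, pow_mul, neg_one_sq, one_pow, one_pow, h]

lemma card_surj_eq_CS (m k : ℕ) :
    (Nat.card {f : Fin m → Fin k // Surjective f} : ℤ) =
      ∑ j ∈ range (k + 1), (-1 : ℤ) ^ (j + k) * (k.choose j : ℤ) * (j : ℤ) ^ m := by
  classical
  set S : Fin k → Finset (Fin m → Fin k) :=
    fun i => univ.filter (fun f => ∀ x, f x ≠ i) with hS
  have h0 : Nat.card {f : Fin m → Fin k // Surjective f} =
      #((univ : Finset (Fin k)).inf fun i => (S i)ᶜ) := by
    rw [Nat.card_eq_fintype_card, Fintype.card_subtype]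
    congr 1
    ext f
    simp only [mem_filter, mem_univ, true_and, Finset.mem_inf, hS, mem_compl, not_forall,
      not_not, Surjective]
    refine (Finset.mem_filter_univ (p := Surjective) f).trans ?_
    simp [Surjective]
  have h1 : ∀ t : Finset (Fin k), #(t.inf S) = (k - #t) ^ m := by
    intro t
    have : t.inf S = Fintype.piFinset (fun _ : Fin m => tᶜ) := by
      ext f
      simp only [Finset.mem_inf, hS, mem_filter, mem_univ, true_and, Fintype.mem_piFinset,
        mem_compl]
      constructor
      · intro h x hx
        exact h (f x) hx x rfl
      · intro h i hi x hfx
        exact h x (hfx ▸ hi)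
    rw [this, Fintype.card_piFinset_const, card_compl, Fintype.card_fin]
  rw [h0, inclusion_exclusion_card_inf_compl]
  have h2 : ∀ t ∈ (univ : Finset (Fin k)).powerset,
      ((-1 : ℤ) ^ #t * #(t.inf S) : ℤ) = (fun j => (-1 : ℤ) ^ j * ((k - j : ℕ) : ℤ) ^ m) #t := by
    intro t _
    simp [h1 t]
  have h3 := Finset.sum_powerset_apply_card
    (fun j => (-1 : ℤ) ^ j * ((k - j : ℕ) : ℤ) ^ m) (x := (univ : Finset (Fin k)))
  rw [Finset.sum_congr rfl h2, h3, card_univ, Fintype.card_fin]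
  rw [← Finset.sum_range_reflect (fun j => (-1 : ℤ) ^ (j + k) * (k.choose j : ℤ) * (j : ℤ) ^ m)
    (k + 1)]
  refine Finset.sum_congr rfl fun j hj => ?_
  rw [mem_range, Nat.lt_succ_iff] at hj
  have e1 : k + 1 - 1 - j = k - j := by omega
  rw [e1, Nat.choose_symm hj]
  have e2 : (-1 : ℤ) ^ (k - j + k) = (-1 : ℤ) ^ j := negpow_congr (by omega)
  rw [e2, nsmul_eq_mul]
  ring

open PowerSeries

lemma coeff_exp_pow (j m : ℕ) : coeff m (exp ℚ ^ j) = (j : ℚ) ^ m / m.factorial := by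
  rw [exp_pow_eq_rescale_exp, coeff_rescale, coeff_exp]
  simp [div_eq_mul_inv, mul_comm]

noncomputable def CS (m k : ℕ) : ℚ :=
  ∑ j ∈ range (k + 1), (-1 : ℚ) ^ (j + k) * (k.choose j : ℚ) * (j : ℚ) ^ m

lemma coeff_A_pow (k m : ℕ) :
    coeff m ((exp ℚ - 1) ^ k) = CS m k / m.factorial := by
  rw [sub_pow, map_sum, CS, sum_div]
  refine Finset.sum_congr rfl fun j hj => ?_
  rw [one_pow, mul_one]
  have h1 : ((-1 : ℚ⟦X⟧) ^ (j + k) * exp ℚ ^ j) * (k.choose j : ℚ⟦X⟧) =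
      C ((-1 : ℚ) ^ (j + k) * (k.choose j : ℚ)) * exp ℚ ^ j := by
    rw [map_mul, map_pow, map_natCast, map_neg, map_one]
    ring
  rw [h1, coeff_C_mul, coeff_exp_pow]
  ring

lemma CS_rec (m k : ℕ) : CS (m + 1) (k + 1) = ((k : ℚ) + 1) * (CS m (k + 1) + CS m k) := by
  have hk : CS m k = ∑ j ∈ range (k + 2), (-1 : ℚ) ^ (j + k) * (k.choose j : ℚ) * (j : ℚ) ^ m := by
    rw [CS, sum_range_succ (n := k + 1)]
    simp
  rw [CS, CS, hk, ← sum_add_distrib, mul_sum]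
  refine Finset.sum_congr rfl fun j hj => ?_
  match j with
  | 0 => simp [pow_succ]
  | (i+1) =>
    have hnat : (((k + 1).choose (i + 1) : ℚ)) * ((i : ℚ) + 1) = ((k : ℚ) + 1) * (k.choose i : ℚ) := by
      exact_mod_cast congrArg (Nat.cast (R := ℚ)) (Nat.add_one_mul_choose_eq k i).symm
    have pascal : (((k + 1).choose (i + 1) : ℚ)) = (k.choose i : ℚ) + (k.choose (i + 1) : ℚ) := by
      exact_mod_cast congrArg (Nat.cast (R := ℚ)) (Nat.choose_succ_succ' k i)
    have e1 : i + 1 + (k + 1) = (i + k) + 2 := by ring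
    have e2 : i + 1 + k = (i + k) + 1 := by ring
    rw [e1, e2, pow_add, pow_add]
    push_cast
    linear_combination ((-1:ℚ)^(i+k) * ((i:ℚ)+1)^m) * hnat -
      ((k:ℚ)+1) * ((-1:ℚ)^(i+k) * ((i:ℚ)+1)^m) * pascal

lemma CS_eq_stirling (m k : ℕ) : CS m k = (k.factorial : ℚ) * (stirling m k : ℚ) := by
  have h1 := card_surj_eq_CS m k
  rw [card_surj_eq m k] at h1
  have h2 : ((k.factorial * stirling m k : ℕ) : ℚ) =
      ∑ j ∈ range (k + 1), (-1 : ℚ) ^ (j + k) * (k.choose j : ℚ) * (j : ℚ) ^ m := by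
    exact_mod_cast congrArg (fun z : ℤ => (z : ℚ)) h1
  rw [CS, ← h2]
  push_cast
  ring

lemma coeff_A_zero {m k : ℕ} (h : m < k) :
    PowerSeries.coeff m ((exp ℚ - 1) ^ k) = 0 := by
  have hX : (PowerSeries.X : ℚ⟦X⟧) ∣ (exp ℚ - 1) := by
    rw [PowerSeries.X_dvd_iff, map_sub, PowerSeries.constantCoeff_exp, map_one, sub_self]
  exact PowerSeries.X_pow_dvd_iff.1 (pow_dvd_pow_of_dvd hX k) m h

lemma stirling_eq_zero {m k : ℕ} (h : m < k) : stirling m k = 0 := by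
  have h0 : CS m k / (m.factorial : ℚ) = 0 := by rw [← coeff_A_pow, coeff_A_zero h]
  have h1 : CS m k = 0 :=
    (div_eq_zero_iff.1 h0).resolve_right (Nat.cast_ne_zero.2 m.factorial_ne_zero)
  have h2 := CS_eq_stirling m k
  rw [h1] at h2
  have hk : (k.factorial : ℚ) ≠ 0 := Nat.cast_ne_zero.2 k.factorial_ne_zero
  have h3 := (mul_eq_zero.1 h2.symm).resolve_left hk
  exact_mod_cast h3

lemma stirling_rec (m k : ℕ) :
    (stirling (m + 1) (k + 1) : ℚ) =
      ((k : ℚ) + 1) * (stirling m (k + 1) : ℚ) + (stirling m k : ℚ) := by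
  have h := CS_rec m k
  simp only [CS_eq_stirling] at h
  have hk : (k.factorial : ℚ) ≠ 0 := Nat.cast_ne_zero.2 k.factorial_ne_zero
  have hk1 : ((k : ℚ) + 1) ≠ 0 := by positivity
  rw [Nat.factorial_succ] at h
  push_cast at h
  refine mul_left_cancel₀ (mul_ne_zero hk1 hk) ?_
  linear_combination h

lemma coeff_mul_E (E : PowerSeries ℚ)
    (hE : ∀ m : ℕ, PowerSeries.coeff m E =
      ∑ k ∈ Finset.range (m + 1),
        (-1 : ℚ) ^ k * (k.factorial : ℚ)⁻¹ *
          PowerSeries.coeff m ((PowerSeries.exp ℚ - 1) ^ k))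
    (F : ℚ⟦X⟧) (m : ℕ) :
    PowerSeries.coeff m (F * E) = ∑ k ∈ range (m + 1),
      (-1 : ℚ) ^ k * (k.factorial : ℚ)⁻¹ *
        PowerSeries.coeff m (F * (exp ℚ - 1) ^ k) := by
  rw [PowerSeries.coeff_mul]
  have step1 : ∀ x ∈ Finset.HasAntidiagonal.antidiagonal m,
      PowerSeries.coeff x.1 F * PowerSeries.coeff x.2 E =
      ∑ k ∈ range (m + 1), (-1 : ℚ) ^ k * (k.factorial : ℚ)⁻¹ *
        (PowerSeries.coeff x.1 F * PowerSeries.coeff x.2 ((exp ℚ - 1) ^ k)) := by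
    intro x hx
    rw [Finset.HasAntidiagonal.mem_antidiagonal] at hx
    rw [hE x.2]
    have hsub : range (x.2 + 1) ⊆ range (m + 1) := range_subset_range.2 (by omega)
    rw [Finset.sum_subset hsub (fun k hk1 hk2 => ?_), Finset.mul_sum]
    · exact Finset.sum_congr rfl fun k _ => by ring
    · rw [mem_range] at hk1 hk2
      rw [coeff_A_zero (by omega), mul_zero]
  rw [Finset.sum_congr rfl step1, Finset.sum_comm]
  refine Finset.sum_congr rfl fun k _ => ?_
  rw [PowerSeries.coeff_mul, Finset.mul_sum]


/-- **Generating function identity for the coefficients `a_{m,n}`.**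
For `n ≥ 1`, `((e^x−1)^{n−1}/(n−1)!) · e^x · e^{−(e^x−1)} = ∑_m a_{m,n} x^m/m!` over `ℚ`,
where `E = e^{−(e^x−1)} = ∑_{k≥0} (−1)^k (e^x−1)^k/k!` is given coefficientwise, and
`a_{m,n} = ∑_{k=1}^{m+1} (−1)^{k−n} C(k−1,n−1) S(m+1,k)` (which vanishes for `n > m+1`);
in particular the coefficient of `x^m/m!` vanishes whenever `n > m + 1`. -/
theorem egf_a_coeff_eq (n : ℕ) (hn : 1 ≤ n) (E : PowerSeries ℚ)
    (hE : ∀ m : ℕ, PowerSeries.coeff m E =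
      ∑ k ∈ Finset.range (m + 1),
        (-1 : ℚ) ^ k * (k.factorial : ℚ)⁻¹ *
          PowerSeries.coeff m ((PowerSeries.exp ℚ - 1) ^ k)) :
    (∀ m : ℕ,
      PowerSeries.coeff m
          (((n - 1).factorial : ℚ)⁻¹ •
            ((PowerSeries.exp ℚ - 1) ^ (n - 1) * PowerSeries.exp ℚ * E)) =
        (∑ k ∈ Finset.Icc 1 (m + 1),
            (-1 : ℚ) ^ (k - n) * ((k - 1).choose (n - 1) : ℚ) * (stirling (m + 1) k : ℚ)) /
          (m.factorial : ℚ)) ∧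
    ∀ m : ℕ, m + 1 < n →
      (∑ k ∈ Finset.Icc 1 (m + 1),
          (-1 : ℚ) ^ (k - n) * ((k - 1).choose (n - 1) : ℚ) * (stirling (m + 1) k : ℚ)) = 0 := by
  obtain ⟨p, rfl⟩ : ∃ p, n = p + 1 := ⟨n - 1, by omega⟩
  rw [Nat.add_sub_cancel]
  constructor
  · intro m
    rw [map_smul, smul_eq_mul]
    have hA : (exp ℚ - 1) ^ p * exp ℚ = (exp ℚ - 1) ^ (p + 1) + (exp ℚ - 1) ^ p := by ring
    rw [hA, coeff_mul_E E hE _ m]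
    have hterm : ∀ k ∈ range (m + 1),
        (-1 : ℚ) ^ k * (k.factorial : ℚ)⁻¹ *
          PowerSeries.coeff m
            (((exp ℚ - 1) ^ (p + 1) + (exp ℚ - 1) ^ p) * (exp ℚ - 1) ^ k) =
        (-1 : ℚ) ^ k * (k.factorial : ℚ)⁻¹ *
          ((CS m (p + 1 + k) + CS m (p + k)) / (m.factorial : ℚ)) := by
      intro k _
      rw [add_mul, map_add, ← pow_add, ← pow_add, coeff_A_pow, coeff_A_pow, ← add_div]
    rw [Finset.sum_congr rfl hterm]
    -- now transform the RHS (target)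
    have hu : ∀ j ∈ Finset.Icc 1 (m + 1),
        (-1 : ℚ) ^ (j - (p + 1)) * ((j - 1).choose p : ℚ) * (stirling (m + 1) j : ℚ) =
        (-1 : ℚ) ^ (j - (p + 1)) * ((j - 1).choose p : ℚ) *
          ((j : ℚ) * (stirling m j : ℚ) + (stirling m (j - 1) : ℚ)) := by
      intro j hj
      rw [Finset.mem_Icc] at hj
      obtain ⟨i, rfl⟩ : ∃ i, j = i + 1 := ⟨j - 1, by omega⟩
      rw [stirling_rec m i]
      push_cast
      ring_nf
    rw [Finset.sum_congr rfl hu]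
    set u : ℕ → ℚ := fun j => (-1 : ℚ) ^ (j - (p + 1)) * ((j - 1).choose p : ℚ) *
      ((j : ℚ) * (stirling m j : ℚ) + (stirling m (j - 1) : ℚ)) with hudef
    have h2 : ∑ j ∈ Finset.Icc 1 (m + 1), u j = ∑ j ∈ Finset.Icc 1 (p + 1 + m), u j := by
      refine Finset.sum_subset (Finset.Icc_subset_Icc_right (by omega)) fun j hj1 hj2 => ?_
      rw [Finset.mem_Icc] at hj1 hj2
      have hz1 : stirling m j = 0 := stirling_eq_zero (by omega)
      have hz2 : stirling m (j - 1) = 0 := stirling_eq_zero (by omega)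
      simp [hudef, hz1, hz2]
    have h3 : ∑ j ∈ Finset.Icc 1 (p + 1 + m), u j =
        ∑ j ∈ Finset.Icc (p + 1) (p + 1 + m), u j := by
      refine (Finset.sum_subset (Finset.Icc_subset_Icc_left (by omega))
        fun j hj1 hj2 => ?_).symm
      rw [Finset.mem_Icc] at hj1 hj2
      have hc0 : (j - 1).choose p = 0 := Nat.choose_eq_zero_of_lt (by omega)
      simp [hudef, hc0]
    have h4 : ∑ j ∈ Finset.Icc (p + 1) (p + 1 + m), u j =
        ∑ k ∈ range (m + 1), u (p + 1 + k) := by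
      rw [← Finset.Ico_add_one_right_eq_Icc, Finset.sum_Ico_eq_sum_range]
      have : p + 1 + m + 1 - (p + 1) = m + 1 := by omega
      rw [this]
    rw [h2, h3, h4, Finset.sum_div, Finset.mul_sum]
    refine Finset.sum_congr rfl fun k hk => ?_
    have e3 : p + 1 + k - (p + 1) = k := by omega
    have e4 : p + 1 + k - 1 = p + k := by omega
    rw [hudef]
    simp only []
    rw [e3, e4, CS_eq_stirling, CS_eq_stirling]
    have hc : ((p + k).choose p : ℚ) * (p.factorial : ℚ) * (k.factorial : ℚ) =
        ((p + k).factorial : ℚ) := by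
      have h5 := Nat.choose_mul_factorial_mul_factorial (Nat.le_add_right p k)
      rw [Nat.add_sub_cancel_left] at h5
      exact_mod_cast congrArg (Nat.cast (R := ℚ)) h5
    have hf : ((p + 1 + k).factorial : ℚ) = ((p : ℚ) + 1 + (k : ℚ)) * ((p + k).factorial : ℚ) := by
      have h5 : p + 1 + k = (p + k) + 1 := by omega
      rw [h5, Nat.factorial_succ]
      push_cast
      ring
    have hp : (p.factorial : ℚ) ≠ 0 := Nat.cast_ne_zero.2 p.factorial_ne_zero
    have hkf : (k.factorial : ℚ) ≠ 0 := Nat.cast_ne_zero.2 k.factorial_ne_zero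
    have hm : (m.factorial : ℚ) ≠ 0 := Nat.cast_ne_zero.2 m.factorial_ne_zero
    rw [hf, ← hc]
    push_cast
    field_simp
  · intro m hm
    refine Finset.sum_eq_zero fun j hj => ?_
    rw [Finset.mem_Icc] at hj
    rw [Nat.choose_eq_zero_of_lt (by omega)]
    simp
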